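/- ζ(4) = Σ_{n=1}^∞ (ψ''(n+1) + 2ζ(3)) / (2n(n+1)) = π⁴/90, where ψ'' is the second derivative of the digamma function. -/
import Mathlib

open scoped BigOperators
open Filter Finset

noncomputable def polygamma2 (x : ℝ) : ℝ := -2 * ∑' k : ℕ, 1 / ((k : ℝ) + x) ^ 3

lemma f3_summable : Summable (fun m : ℕ => 1 / ((m : ℝ) + 1) ^ 3) := by
  have := (summable_nat_add_iff 1).mpr <| Real.summable_one_div_nat_pow.mpr (by norm_num : 1 < 3)
  exact this.congr fun n => by push_cast; ring_nf

lemma tail_eq (n : ℕ) : ∑' k : ℕ, 1 / ((k : ℝ) + ((n:ℝ)+2)) ^ 3 =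
    (∑' m : ℕ, 1 / ((m : ℝ) + 1) ^ 3) - ∑ i ∈ range (n+1), 1 / ((i : ℝ) + 1) ^ 3 := by
  have h := Summable.sum_add_tsum_nat_add (f := fun m : ℕ => 1 / ((m : ℝ) + 1) ^ 3) (n+1) f3_summable
  have h2 : ∑' (i : ℕ), (fun m : ℕ => 1 / ((m : ℝ) + 1) ^ 3) (i + (n + 1)) =
      ∑' k : ℕ, 1 / ((k : ℝ) + ((n:ℝ)+2)) ^ 3 :=
    tsum_congr fun k => by push_cast; ring_nf
  rw [h2] at h
  linarith

/-- partial sums of 1/(m+1)³ -/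
noncomputable def H (n : ℕ) : ℝ := ∑ i ∈ range n, 1 / ((i : ℝ) + 1) ^ 3

/-- b n = H (n+1) / (n+1) -/
noncomputable def B (n : ℕ) : ℝ := H (n+1) / ((n : ℝ) + 1)

lemma H_nonneg (n : ℕ) : 0 ≤ H n :=
  Finset.sum_nonneg fun i _ => by positivity

lemma H_le (n : ℕ) : H n ≤ ∑' m : ℕ, 1 / ((m : ℝ) + 1) ^ 3 :=
  Summable.sum_le_tsum _ (fun i _ => by positivity) f3_summable

lemma B_tendsto : Tendsto B atTop (nhds 0) := by
  have h1 : Tendsto (fun n : ℕ => (∑' m : ℕ, 1 / ((m : ℝ) + 1) ^ 3) / ((n:ℝ)+1)) atTop (nhds 0) := by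
    apply Tendsto.div_atTop tendsto_const_nhds
    exact tendsto_atTop_add_const_right _ _ tendsto_natCast_atTop_atTop
  have h0 : Tendsto (fun _ : ℕ => (0:ℝ)) atTop (nhds 0) := tendsto_const_nhds
  refine tendsto_of_tendsto_of_tendsto_of_le_of_le h0 h1 (fun n => ?_) (fun n => ?_)
  · exact div_nonneg (H_nonneg _) (by positivity)
  · exact div_le_div_of_nonneg_right (H_le _) (by positivity) |>.trans_eq rfl

lemma zeta4_summable : Summable (fun n : ℕ => 1 / ((n : ℝ) + 1) ^ 4) := by
  have := (summable_nat_add_iff 1).mpr <| Real.summable_one_div_nat_pow.mpr (by norm_num : 1 < 4)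
  exact this.congr fun n => by push_cast; ring_nf

lemma key_hasSum :
    HasSum (fun n : ℕ => H (n+1) / (((n:ℝ)+1) * ((n:ℝ)+2)))
      (∑' n : ℕ, 1 / ((n : ℝ) + 1) ^ 4) := by
  set ζ4 := ∑' n : ℕ, 1 / ((n : ℝ) + 1) ^ 4 with hζ4
  have hnn : ∀ n : ℕ, 0 ≤ H (n+1) / (((n:ℝ)+1) * ((n:ℝ)+2)) := fun n =>
    div_nonneg (H_nonneg _) (by positivity)
  rw [hasSum_iff_tendsto_nat_of_nonneg hnn]
  have hdecomp : ∀ n : ℕ, H (n+1) / (((n:ℝ)+1) * ((n:ℝ)+2)) =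
      (B n - B (n+1)) + 1 / ((n:ℝ)+2) ^ 4 := by
    intro n
    have hH : H (n+2) = H (n+1) + 1 / ((n:ℝ)+2) ^ 3 := by
      simp [H, Finset.sum_range_succ]
      ring_nf

    simp only [B, hH]
    have h1 : ((n:ℝ)+1) ≠ 0 := by positivity
    have h2 : ((n:ℝ)+2) ≠ 0 := by positivity
    push_cast
    field_simp
    ring
  have hps : ∀ N : ℕ, ∑ n ∈ range N, H (n+1) / (((n:ℝ)+1) * ((n:ℝ)+2)) =
      (B 0 - B N) + ∑ n ∈ range N, 1 / ((n:ℝ)+2) ^ 4 := by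
    intro N
    rw [show (fun n => H (n+1) / (((n:ℝ)+1) * ((n:ℝ)+2))) = fun n =>
      (B n - B (n+1)) + 1 / ((n:ℝ)+2) ^ 4 from funext hdecomp]
    rw [Finset.sum_add_distrib, Finset.sum_range_sub' B N]
  simp only [hps]
  have hB0 : B 0 = 1 := by simp [B, H]
  have htail : HasSum (fun n : ℕ => 1 / ((n:ℝ)+2) ^ 4) (ζ4 - 1) := by
    have h : HasSum (fun n : ℕ => 1 / (((n+1 : ℕ) : ℝ) + 1) ^ 4) (ζ4 - 1) :=
      (hasSum_nat_add_iff (f := fun n : ℕ => 1 / ((n : ℝ) + 1) ^ 4) 1).mpr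
      (by
        have he : ζ4 - 1 + ∑ i ∈ range 1, 1 / ((i:ℝ)+1) ^ 4 = ζ4 := by simp
        rw [he]; exact zeta4_summable.hasSum)
    exact h.congr_fun fun n => by push_cast; ring_nf
  have := ((tendsto_const_nhds (x := B 0)).sub B_tendsto).add htail.tendsto_sum_nat
  convert this using 2
  rw [hB0]; ring

/-- `ζ(4) = Σ_{n=1}^∞ (ψ''(n+1) + 2ζ(3))/(2n(n+1)) = π⁴/90`. -/
theorem zeta_four_eq_polygamma_sum :
    (∑' n : ℕ, 1 / ((n : ℝ) + 1) ^ 4) =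
      (∑' n : ℕ, (polygamma2 ((n : ℝ) + 2) + 2 * ∑' m : ℕ, 1 / ((m : ℝ) + 1) ^ 3) /
        (2 * ((n : ℝ) + 1) * ((n : ℝ) + 2))) ∧
    (∑' n : ℕ, 1 / ((n : ℝ) + 1) ^ 4) = Real.pi ^ 4 / 90 := by
  constructor
  · have hterm : ∀ n : ℕ,
        (polygamma2 ((n : ℝ) + 2) + 2 * ∑' m : ℕ, 1 / ((m : ℝ) + 1) ^ 3) /
          (2 * ((n : ℝ) + 1) * ((n : ℝ) + 2)) = H (n+1) / (((n:ℝ)+1) * ((n:ℝ)+2)) := by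
      intro n
      have h1 : polygamma2 ((n : ℝ) + 2) =
          -2 * ((∑' m : ℕ, 1 / ((m : ℝ) + 1) ^ 3) - H (n+1)) := by
        rw [polygamma2, tail_eq n]; rfl
      rw [h1]
      have h2 : ((n:ℝ)+1) ≠ 0 := by positivity
      have h3 : ((n:ℝ)+2) ≠ 0 := by positivity
      field_simp
      ring
    rw [tsum_congr hterm]
    exact key_hasSum.tsum_eq.symm
  · have h : HasSum (fun n : ℕ => 1 / (((n+1 : ℕ) : ℝ)) ^ 4) (Real.pi ^ 4 / 90) :=
      (hasSum_nat_add_iff (f := fun n : ℕ => 1 / ((n : ℝ)) ^ 4) 1).mpr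
        (by simpa using hasSum_zeta_four)
    have h2 : HasSum (fun n : ℕ => 1 / ((n : ℝ) + 1) ^ 4) (Real.pi ^ 4 / 90) :=
      h.congr_fun fun n => by push_cast; ring_nf
    exact h2.tsum_eq
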